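/- Let d_w > 1, c > 0 and a > 1, and let μ be a finite Borel measure on (0,∞) satisfying ∫_1^∞ μ((u,∞)) · u^{−1} du < ∞. Then ∑_{M=1}^∞ ∫_{(0,∞)} exp(−c · (a^M · u^{−1/d_w})^{d_w/(d_w−1)}) dμ(u) < ∞. -/

import Mathlib

open MeasureTheory

/-- The analytic content of Lemma 2.4 of the paper: for `d_w > 1`, `c > 0`, `a > 1` and a finite
Borel measure `μ` on `(0,∞)` with `∫_1^∞ μ((u,∞))/u du < ∞`, the series
`∑_{M≥1} ∫_{(0,∞)} exp(-c (a^M u^{-1/d_w})^{d_w/(d_w-1)}) dμ(u)` converges. -/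
private lemma npow_rpow_comm (x : ℝ) (hx : 0 ≤ x) (n : ℕ) (y : ℝ) :
    (x ^ n) ^ y = (x ^ y) ^ n := by
  rw [← Real.rpow_natCast x n, ← Real.rpow_mul hx, mul_comm, Real.rpow_mul hx, Real.rpow_natCast]

theorem stmt6 (dw : ℝ) (hdw : 1 < dw) (c a : ℝ) (hc : 0 < c) (ha : 1 < a)
    (μ : Measure ℝ) [IsFiniteMeasure μ] (hsupp : μ (Set.Iic 0) = 0)
    (htail : ∫⁻ u in Set.Ioi (1:ℝ), μ (Set.Ioi u) / ENNReal.ofReal u < ⊤) :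
    (∑' M : ℕ, ∫⁻ u in Set.Ioi (0:ℝ),
        ENNReal.ofReal (Real.exp (-c * (a ^ (M + 1) * u ^ (-(1/dw))) ^ (dw/(dw-1)))) ∂μ) < ⊤ := by
  have ha0 : (0:ℝ) < a := lt_trans one_pos ha
  have hdw0 : (0:ℝ) < dw := lt_trans one_pos hdw
  have hβ : (0:ℝ) < dw / (dw - 1) := div_pos hdw0 (by linarith)
  -- the threshold base
  set ρ : ℝ := a ^ (dw / 2) with hρdef
  have hρ : 1 < ρ := Real.one_lt_rpow_iff_of_pos ha0 |>.2 (Or.inl ⟨ha, by linarith⟩)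
  have hρ0 : (0:ℝ) < ρ := lt_trans one_pos hρ
  -- the geometric base for the exponential part
  set s : ℝ := a ^ ((1/2) * (dw / (dw - 1))) with hsdef
  have hs : 1 < s :=
    Real.one_lt_rpow_iff_of_pos ha0 |>.2 (Or.inl ⟨ha, by positivity⟩)
  set r : ℝ := Real.exp (-c * (s - 1)) with hrdef
  have hr0 : 0 ≤ r := (Real.exp_pos _).le
  have hr1 : r < 1 := Real.exp_lt_one_iff.2 (by nlinarith)
  set q : ENNReal := ENNReal.ofReal r with hqdef
  have hq1 : q < 1 := by
    rw [hqdef, ← ENNReal.ofReal_one]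
    exact (ENNReal.ofReal_lt_ofReal_iff one_pos).2 hr1
  -- pointwise bound on the small-u region
  have hpt : ∀ M : ℕ, ∀ u ∈ Set.Ioc (0:ℝ) (ρ ^ (M+1)),
      ENNReal.ofReal (Real.exp (-c * (a ^ (M + 1) * u ^ (-(1/dw))) ^ (dw/(dw-1)))) ≤ q ^ (M+1) := by
    intro M u ⟨hu0, huR⟩
    set t : ℝ := a ^ ((1:ℝ)/2) with htdef
    have ht1 : 1 < t := Real.one_lt_rpow_iff_of_pos ha0 |>.2 (Or.inl ⟨ha, by norm_num⟩)
    have ht0 : (0:ℝ) < t := lt_trans one_pos ht1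
    -- a^(M+1) * (ρ^(M+1))^(-(1/dw)) = t^(M+1)
    have hkey : a ^ (M+1) * (ρ ^ (M+1)) ^ (-(1/dw)) = t ^ (M+1) := by
      have h2 : ρ ^ (-(1/dw)) = a ^ (-(1/2) : ℝ) := by
        rw [hρdef, ← Real.rpow_mul ha0.le]
        congr 1
        field_simp
      have h3 : a * a ^ (-(1/2) : ℝ) = t := by
        rw [htdef]
        nth_rewrite 1 [← Real.rpow_one a]
        rw [← Real.rpow_add ha0]
        norm_num
      rw [npow_rpow_comm ρ hρ0.le, h2, ← mul_pow, h3]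
    have hXge : t ^ (M+1) ≤ a ^ (M+1) * u ^ (-(1/dw)) := by
      rw [← hkey]
      have := Real.rpow_le_rpow_of_nonpos hu0 huR (neg_nonpos.2 (by positivity) : -(1/dw) ≤ 0)
      exact mul_le_mul_of_nonneg_left this (by positivity)
    have hX0 : (0:ℝ) < t ^ (M+1) := pow_pos ht0 _
    have hpow : s ^ (M+1) ≤ (a ^ (M + 1) * u ^ (-(1/dw))) ^ (dw/(dw-1)) := by
      have h1 : (t ^ (M+1)) ^ (dw/(dw-1)) ≤ (a ^ (M + 1) * u ^ (-(1/dw))) ^ (dw/(dw-1)) :=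
        Real.rpow_le_rpow hX0.le hXge hβ.le
      refine le_trans (le_of_eq ?_) h1
      rw [npow_rpow_comm t ht0.le, htdef, ← Real.rpow_mul ha0.le, hsdef]
    -- Bernoulli
    have hbern : ((M:ℝ)+1) * (s - 1) ≤ s ^ (M+1) := by
      have := one_add_mul_le_pow (a := s - 1) (by linarith) (M+1)
      have h2 : (1:ℝ) + (↑(M+1)) * (s-1) ≤ s ^ (M+1) := by
        simpa using this
      push_cast at h2
      nlinarith
    have hexp : Real.exp (-c * (a ^ (M + 1) * u ^ (-(1/dw))) ^ (dw/(dw-1))) ≤ r ^ (M+1) := by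
      rw [hrdef, ← Real.exp_nat_mul]
      apply Real.exp_le_exp.2
      push_cast
      nlinarith
    calc ENNReal.ofReal (Real.exp (-c * (a ^ (M + 1) * u ^ (-(1/dw))) ^ (dw/(dw-1))))
        ≤ ENNReal.ofReal (r ^ (M+1)) := ENNReal.ofReal_le_ofReal hexp
      _ = q ^ (M+1) := ENNReal.ofReal_pow hr0 _
  -- integrand is at most 1
  have hle1 : ∀ M : ℕ, ∀ u : ℝ, 0 < u →
      ENNReal.ofReal (Real.exp (-c * (a ^ (M + 1) * u ^ (-(1/dw))) ^ (dw/(dw-1)))) ≤ 1 := by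
    intro M u hu
    apply ENNReal.ofReal_le_one.2
    apply Real.exp_le_one_iff.2
    have : (0:ℝ) ≤ (a ^ (M + 1) * u ^ (-(1/dw))) ^ (dw/(dw-1)) := by positivity
    nlinarith
  -- per-term bound
  have hterm : ∀ M : ℕ, (∫⁻ u in Set.Ioi (0:ℝ),
      ENNReal.ofReal (Real.exp (-c * (a ^ (M + 1) * u ^ (-(1/dw))) ^ (dw/(dw-1)))) ∂μ)
      ≤ μ Set.univ * q ^ (M+1) + μ (Set.Ioi (ρ ^ (M+1))) := by
    intro M
    have hsub : Set.Ioi (0:ℝ) ⊆ Set.Ioc 0 (ρ ^ (M+1)) ∪ Set.Ioi (ρ ^ (M+1)) := by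
      intro u hu
      by_cases h : u ≤ ρ ^ (M+1)
      · exact Or.inl ⟨hu, h⟩
      · exact Or.inr (lt_of_not_ge h)
    calc (∫⁻ u in Set.Ioi (0:ℝ), ENNReal.ofReal
            (Real.exp (-c * (a ^ (M + 1) * u ^ (-(1/dw))) ^ (dw/(dw-1)))) ∂μ)
        ≤ ∫⁻ u in (Set.Ioc 0 (ρ ^ (M+1)) ∪ Set.Ioi (ρ ^ (M+1))), ENNReal.ofReal
            (Real.exp (-c * (a ^ (M + 1) * u ^ (-(1/dw))) ^ (dw/(dw-1)))) ∂μ :=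
          lintegral_mono_set hsub
      _ ≤ (∫⁻ u in Set.Ioc (0:ℝ) (ρ ^ (M+1)), ENNReal.ofReal
            (Real.exp (-c * (a ^ (M + 1) * u ^ (-(1/dw))) ^ (dw/(dw-1)))) ∂μ)
          + ∫⁻ u in Set.Ioi (ρ ^ (M+1)), ENNReal.ofReal
            (Real.exp (-c * (a ^ (M + 1) * u ^ (-(1/dw))) ^ (dw/(dw-1)))) ∂μ :=
          lintegral_union_le _ _ _
      _ ≤ μ Set.univ * q ^ (M+1) + μ (Set.Ioi (ρ ^ (M+1))) := by
          gcongr ?_ + ?_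
          · calc (∫⁻ u in Set.Ioc (0:ℝ) (ρ ^ (M+1)), ENNReal.ofReal
                  (Real.exp (-c * (a ^ (M + 1) * u ^ (-(1/dw))) ^ (dw/(dw-1)))) ∂μ)
                ≤ ∫⁻ _ in Set.Ioc (0:ℝ) (ρ ^ (M+1)), q ^ (M+1) ∂μ :=
                  setLIntegral_mono' measurableSet_Ioc (hpt M)
              _ = q ^ (M+1) * μ (Set.Ioc (0:ℝ) (ρ ^ (M+1))) := setLIntegral_const _ _
              _ ≤ q ^ (M+1) * μ Set.univ := by
                  gcongr; exact Set.subset_univ _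
              _ = μ Set.univ * q ^ (M+1) := mul_comm _ _
          · calc (∫⁻ u in Set.Ioi (ρ ^ (M+1)), ENNReal.ofReal
                  (Real.exp (-c * (a ^ (M + 1) * u ^ (-(1/dw))) ^ (dw/(dw-1)))) ∂μ)
                ≤ ∫⁻ _ in Set.Ioi (ρ ^ (M+1)), 1 ∂μ :=
                  setLIntegral_mono' measurableSet_Ioi (fun u hu => hle1 M u (lt_trans (pow_pos hρ0 _) hu))
              _ = 1 * μ (Set.Ioi (ρ ^ (M+1))) := setLIntegral_const _ _
              _ = μ (Set.Ioi (ρ ^ (M+1))) := one_mul _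
  -- the tail sum
  set K : ENNReal := ENNReal.ofReal (1 - ρ⁻¹) with hKdef
  have hK0 : K ≠ 0 := by
    rw [hKdef]
    simp only [ne_eq, ENNReal.ofReal_eq_zero, not_le]
    have : ρ⁻¹ < 1 := inv_lt_one_of_one_lt₀ hρ
    linarith
  have hB : ∀ M : ℕ, μ (Set.Ioi (ρ ^ (M+1))) * K ≤
      ∫⁻ u in Set.Ioc (ρ ^ M) (ρ ^ (M+1)), μ (Set.Ioi u) / ENNReal.ofReal u := by
    intro M
    have hRpos : (0:ℝ) < ρ ^ (M+1) := pow_pos hρ0 _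
    have hconst : ∀ u ∈ Set.Ioc (ρ ^ M) (ρ ^ (M+1)),
        μ (Set.Ioi (ρ ^ (M+1))) * ENNReal.ofReal ((ρ ^ (M+1))⁻¹) ≤
          μ (Set.Ioi u) / ENNReal.ofReal u := by
      intro u ⟨h1, h2⟩
      have hu0 : 0 < u := lt_trans (pow_pos hρ0 M) h1
      rw [div_eq_mul_inv, ← ENNReal.ofReal_inv_of_pos hu0]
      exact mul_le_mul' (measure_mono (Set.Ioi_subset_Ioi h2))
        (ENNReal.ofReal_le_ofReal (inv_anti₀ hu0 h2))
    calc μ (Set.Ioi (ρ ^ (M+1))) * K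
        = μ (Set.Ioi (ρ ^ (M+1))) * ENNReal.ofReal ((ρ ^ (M+1))⁻¹) *
            ENNReal.ofReal (ρ ^ (M+1) - ρ ^ M) := by
          rw [mul_assoc, ← ENNReal.ofReal_mul (by positivity)]
          congr 2
          rw [hKdef]
          congr 1
          have h1 : ρ ^ (M+1) ≠ 0 := ne_of_gt hRpos
          field_simp
          rw [pow_succ]
          ring
      _ = ∫⁻ _ in Set.Ioc (ρ ^ M) (ρ ^ (M+1)),
            μ (Set.Ioi (ρ ^ (M+1))) * ENNReal.ofReal ((ρ ^ (M+1))⁻¹) := by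
          rw [setLIntegral_const, Real.volume_Ioc]
      _ ≤ ∫⁻ u in Set.Ioc (ρ ^ M) (ρ ^ (M+1)), μ (Set.Ioi u) / ENNReal.ofReal u :=
          setLIntegral_mono' measurableSet_Ioc hconst
  have hdisj : Pairwise (Function.onFun Disjoint fun M : ℕ => Set.Ioc (ρ ^ M) (ρ ^ (M+1))) := by
    intro m n hmn
    rcases (Ne.lt_or_gt hmn) with h | h
    · apply Set.Ioc_disjoint_Ioc.2
      calc min (ρ ^ (m+1)) (ρ ^ (n+1)) ≤ ρ ^ (m+1) := min_le_left _ _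
        _ ≤ ρ ^ n := pow_le_pow_right₀ hρ.le h
        _ ≤ max (ρ ^ m) (ρ ^ n) := le_max_right _ _
    · apply Set.Ioc_disjoint_Ioc.2
      calc min (ρ ^ (m+1)) (ρ ^ (n+1)) ≤ ρ ^ (n+1) := min_le_right _ _
        _ ≤ ρ ^ m := pow_le_pow_right₀ hρ.le h
        _ ≤ max (ρ ^ m) (ρ ^ n) := le_max_left _ _
  have hBsum : (∑' M : ℕ, μ (Set.Ioi (ρ ^ (M+1)))) * K ≤
      ∫⁻ u in Set.Ioi (1:ℝ), μ (Set.Ioi u) / ENNReal.ofReal u := by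
    rw [← ENNReal.tsum_mul_right]
    calc (∑' M : ℕ, μ (Set.Ioi (ρ ^ (M+1))) * K)
        ≤ ∑' M : ℕ, ∫⁻ u in Set.Ioc (ρ ^ M) (ρ ^ (M+1)), μ (Set.Ioi u) / ENNReal.ofReal u :=
          ENNReal.tsum_le_tsum hB
      _ = ∫⁻ u in ⋃ M : ℕ, Set.Ioc (ρ ^ M) (ρ ^ (M+1)), μ (Set.Ioi u) / ENNReal.ofReal u :=
          (lintegral_iUnion (fun _ => measurableSet_Ioc) hdisj _).symm
      _ ≤ ∫⁻ u in Set.Ioi (1:ℝ), μ (Set.Ioi u) / ENNReal.ofReal u := by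
          apply lintegral_mono_set
          apply Set.iUnion_subset
          intro M u ⟨h1, _⟩
          exact lt_of_le_of_lt (one_le_pow₀ hρ.le) h1
  have hBfin : (∑' M : ℕ, μ (Set.Ioi (ρ ^ (M+1)))) < ⊤ := by
    have hle : (∑' M : ℕ, μ (Set.Ioi (ρ ^ (M+1)))) ≤
        (∫⁻ u in Set.Ioi (1:ℝ), μ (Set.Ioi u) / ENNReal.ofReal u) / K :=
      (ENNReal.le_div_iff_mul_le (Or.inl hK0) (Or.inl ENNReal.ofReal_ne_top)).2 hBsum
    exact lt_of_le_of_lt hle (ENNReal.div_lt_top htail.ne hK0)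
  have hAfin : (∑' M : ℕ, μ Set.univ * q ^ (M+1)) < ⊤ := by
    rw [ENNReal.tsum_mul_left, ENNReal.tsum_geometric_add_one]
    refine ENNReal.mul_lt_top (measure_lt_top μ _) (ENNReal.mul_lt_top ?_ ?_)
    · exact lt_of_lt_of_le hq1 le_top
    · exact ENNReal.inv_lt_top.2 (tsub_pos_iff_lt.2 hq1)
  calc (∑' M : ℕ, ∫⁻ u in Set.Ioi (0:ℝ),
          ENNReal.ofReal (Real.exp (-c * (a ^ (M + 1) * u ^ (-(1/dw))) ^ (dw/(dw-1)))) ∂μ)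
      ≤ ∑' M : ℕ, (μ Set.univ * q ^ (M+1) + μ (Set.Ioi (ρ ^ (M+1)))) :=
        ENNReal.tsum_le_tsum hterm
    _ = (∑' M : ℕ, μ Set.univ * q ^ (M+1)) + ∑' M : ℕ, μ (Set.Ioi (ρ ^ (M+1))) :=
        ENNReal.tsum_add
    _ < ⊤ := ENNReal.add_lt_top.2 ⟨hAfin, hBfin⟩
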